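/- The square φ_a ∘ φ_a acts on the simple roots as a translation: it fixes α_0, α_3, α_4, α_6, α_7, α_8, and sends α_1 ↦ α_1 + 2δ, α_2 ↦ α_2 − 2δ, α_5 ↦ α_5 + δ. On the other hand, φ_a itself is not a translation on the root lattice: there is no integer k with φ_a(α_0) = α_0 + kδ. -/

import Mathlib

open Finset Function

/-- The Picard lattice `ℤ^10` with basis `H_f, H_g, e_1, …, e_8`
(coordinates `0, 1, 2, …, 9`). -/
abbrev Pic : Type := Fin 10 → ℤ

/-- The intersection form: `(H_f|H_g) = 1`, `(H_f|H_f) = (H_g|H_g) = 0`,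
`(H_f|e_i) = (H_g|e_i) = 0`, `(e_i|e_j) = -δ_{ij}`. -/
def form (v w : Pic) : ℤ :=
  v 0 * w 1 + v 1 * w 0
    - v 2 * w 2 - v 3 * w 3 - v 4 * w 4 - v 5 * w 5
    - v 6 * w 6 - v 7 * w 7 - v 8 * w 8 - v 9 * w 9

/-- The anticanonical class `δ = 2H_f + 2H_g - (e_1 + ⋯ + e_8)`. -/
def delta : Pic := ![2, 2, -1, -1, -1, -1, -1, -1, -1, -1]

/-- The simple roots `α_0, …, α_8`:
`α_0 = e_1 - e_2`, `α_1 = H_f - H_g`, `α_2 = H_g - e_1 - e_2`,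
`α_3 = e_2 - e_3`, `α_4 = e_3 - e_4`, `α_5 = e_4 - e_5`,
`α_6 = e_5 - e_6`, `α_7 = e_6 - e_7`, `α_8 = e_7 - e_8`. -/
def α : Fin 9 → Pic :=
  ![![0, 0, 1, -1, 0, 0, 0, 0, 0, 0],
    ![1, -1, 0, 0, 0, 0, 0, 0, 0, 0],
    ![0, 1, -1, -1, 0, 0, 0, 0, 0, 0],
    ![0, 0, 0, 1, -1, 0, 0, 0, 0, 0],
    ![0, 0, 0, 0, 1, -1, 0, 0, 0, 0],
    ![0, 0, 0, 0, 0, 1, -1, 0, 0, 0],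
    ![0, 0, 0, 0, 0, 0, 1, -1, 0, 0],
    ![0, 0, 0, 0, 0, 0, 0, 1, -1, 0],
    ![0, 0, 0, 0, 0, 0, 0, 0, 1, -1]]

/-- Images of the basis vectors `H_f, H_g, e_1, …, e_8` under `φ_a`. -/
def phiaImg : Fin 10 → Pic :=
  ![![5, 2, -1, -1, -1, -1, -2, -2, -2, -2],
    ![2, 1, 0, 0, 0, 0, -1, -1, -1, -1],
    ![2, 1, -1, 0, 0, 0, -1, -1, -1, -1],
    ![2, 1, 0, -1, 0, 0, -1, -1, -1, -1],
    ![2, 1, 0, 0, -1, 0, -1, -1, -1, -1],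
    ![2, 1, 0, 0, 0, -1, -1, -1, -1, -1],
    ![1, 0, 0, 0, 0, 0, -1, 0, 0, 0],
    ![1, 0, 0, 0, 0, 0, 0, -1, 0, 0],
    ![1, 0, 0, 0, 0, 0, 0, 0, -1, 0],
    ![1, 0, 0, 0, 0, 0, 0, 0, 0, -1]]

/-- The ℤ-linear map `φ_a : Pic → Pic`. -/
def phia (v : Pic) : Pic := ∑ i : Fin 10, v i • phiaImg i

/-- `φ_a ∘ φ_a` acts on the simple roots as a translation, while `φ_a` itself
is not a translation on the root lattice. -/
theorem statement_6 :
    ((phia ∘ phia) (α 0) = α 0 ∧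
     (phia ∘ phia) (α 1) = α 1 + 2 • delta ∧
     (phia ∘ phia) (α 2) = α 2 - 2 • delta ∧
     (phia ∘ phia) (α 3) = α 3 ∧
     (phia ∘ phia) (α 4) = α 4 ∧
     (phia ∘ phia) (α 5) = α 5 + delta ∧
     (phia ∘ phia) (α 6) = α 6 ∧
     (phia ∘ phia) (α 7) = α 7 ∧
     (phia ∘ phia) (α 8) = α 8) ∧
    ¬ ∃ k : ℤ, phia (α 0) = α 0 + k • delta := by
  constructor
  · exact ⟨by decide, by decide, by decide, by decide, by decide, by decide, by decide,
      by decide, by decide⟩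
  · rintro ⟨k, h⟩
    have h0 := congrFun h 0
    have h2 := congrFun h 2
    have e0 : phia (α 0) 0 = 0 := by decide
    have e2 : phia (α 0) 2 = -1 := by decide
    rw [e0] at h0
    rw [e2] at h2
    simp only [Pi.add_apply, Pi.smul_apply, smul_eq_mul] at h0 h2
    norm_num [α, delta] at h0 h2
    replace h2 : (-1 : ℤ) = 1 + k * (-1) := h2
    omega
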